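/- (Generalized GM-switching, Wang–Qiu–Hu) Let G be a finite simple graph whose vertex set is partitioned as V_1 ⊔ V_2 ⊔ V with |V_1| = |V_2| = m for a positive integer m. For a vertex v, let d_i(v) be the number of neighbors of v in V_i. Suppose there is an integer ℓ such that d_1(v) − d_2(v) = ℓ for all v ∈ V_1 and d_2(u) − d_1(u) = ℓ for all u ∈ V_2, and suppose every vertex v ∈ V satisfies one of: (i) v is adjacent to all vertices of V_1 and to none of V_2; (ii) v is adjacent to all vertices of V_2 and to none of V_1; (iii) d_1(v) = d_2(v). Let G′ be obtained from G by interchanging, for each v ∈ V of type (i) or (ii), its full adjacency to one part with full adjacency to the other part (so a vertex adjacent to all of V_1 and none of V_2 becomes adjacent to all of V_2 and none of V_1, and vice versa), leaving all other adjacencies unchanged. Then the adjacency matrices of G and G′ have the same characteristic polynomial. -/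

import Mathlib

open Matrix Polynomial

lemma charpoly_conj_involution' {n : Type*} [Fintype n] [DecidableEq n] {R : Type*} [CommRing R]
    (Q A : Matrix n n R) (hQ : Q * Q = 1) : (Q * A * Q).charpoly = A.charpoly := by
  have hmap : Q.map (C : R →+* R[X]) * Q.map (C : R →+* R[X]) = 1 := by
    rw [← Matrix.map_mul, hQ]
    exact Matrix.map_one _ (map_zero _) (map_one _)
  have hcm : charmatrix (Q * A * Q) =
      Q.map (C : R →+* R[X]) * charmatrix A * Q.map (C : R →+* R[X]) := by
    have hcomm := Matrix.scalar_commute (n := n) (X : R[X])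
      (fun r' => Commute.all _ _) (Q.map (C : R →+* R[X]))
    rw [charmatrix, charmatrix]
    rw [Matrix.mul_sub, Matrix.sub_mul]
    congr 1
    · rw [← hcomm.eq, mul_assoc, hmap, mul_one]
    · simp only [RingHom.mapMatrix_apply, ← Matrix.map_mul]
  rw [Matrix.charpoly, Matrix.charpoly, hcm, Matrix.det_mul, Matrix.det_mul]
  have h1 : (Q.map (C : R →+* R[X])).det * (Q.map (C : R →+* R[X])).det = 1 := by
    rw [← Matrix.det_mul, hmap, Matrix.det_one]
  calc (Q.map (C : R →+* R[X])).det * (charmatrix A).det * (Q.map (C : R →+* R[X])).det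
      = ((Q.map (C : R →+* R[X])).det * (Q.map (C : R →+* R[X])).det) * (charmatrix A).det := by
        ring
    _ = (charmatrix A).det := by rw [h1, one_mul]


/-- **Generalized GM-switching (Wang–Qiu–Hu).** Let the vertex set of a finite simple
graph `G` be partitioned as `V1 ⊔ V2 ⊔ W` with `|V1| = |V2| = m > 0`, such that there
is an integer `ℓ` with `d₁(v) − d₂(v) = ℓ` for all `v ∈ V1` and `d₂(u) − d₁(u) = ℓ`
for all `u ∈ V2`, and every `v ∈ W` is (i) adjacent to all of `V1` and none of `V2`,
or (ii) adjacent to all of `V2` and none of `V1`, or (iii) has `d₁(v) = d₂(v)`.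
Then the graph `G'` obtained by interchanging, for each `v ∈ W` of type (i) or (ii),
full adjacency to one part with full adjacency to the other part, is cospectral
with `G`. -/
theorem generalized_GM_switching {V : Type*} [Fintype V] [DecidableEq V]
    (G G' : SimpleGraph V) [DecidableRel G.Adj] [DecidableRel G'.Adj]
    (m : ℕ) (hm : 0 < m) (V1 V2 W : Finset V)
    (hcard1 : V1.card = m) (hcard2 : V2.card = m)
    (h12 : Disjoint V1 V2) (h1W : Disjoint V1 W) (h2W : Disjoint V2 W)
    (hcover : ∀ v, v ∈ V1 ∨ v ∈ V2 ∨ v ∈ W)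
    (ℓ : ℤ)
    (hV1 : ∀ v ∈ V1,
      ((V1.filter (fun w => G.Adj v w)).card : ℤ) -
        (V2.filter (fun w => G.Adj v w)).card = ℓ)
    (hV2 : ∀ u ∈ V2,
      ((V2.filter (fun w => G.Adj u w)).card : ℤ) -
        (V1.filter (fun w => G.Adj u w)).card = ℓ)
    (hW : ∀ v ∈ W,
      ((∀ w ∈ V1, G.Adj v w) ∧ (∀ w ∈ V2, ¬ G.Adj v w)) ∨
      ((∀ w ∈ V2, G.Adj v w) ∧ (∀ w ∈ V1, ¬ G.Adj v w)) ∨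
      (V1.filter (fun w => G.Adj v w)).card = (V2.filter (fun w => G.Adj v w)).card)
    -- `G'` flips the adjacency between a type (i) or (ii) vertex of `W` and `V1 ∪ V2`
    (hG' : ∀ u v, G'.Adj u v ↔
      Xor'
        ((u ∈ W ∧ (v ∈ V1 ∨ v ∈ V2) ∧
            (((∀ w ∈ V1, G.Adj u w) ∧ (∀ w ∈ V2, ¬ G.Adj u w)) ∨
             ((∀ w ∈ V2, G.Adj u w) ∧ (∀ w ∈ V1, ¬ G.Adj u w)))) ∨
         (v ∈ W ∧ (u ∈ V1 ∨ u ∈ V2) ∧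
            (((∀ w ∈ V1, G.Adj v w) ∧ (∀ w ∈ V2, ¬ G.Adj v w)) ∨
             ((∀ w ∈ V2, G.Adj v w) ∧ (∀ w ∈ V1, ¬ G.Adj v w)))))
        (G.Adj u v)) :
    (G.adjMatrix ℝ).charpoly = (G'.adjMatrix ℝ).charpoly := by
    classical
  have hm0 : (m : ℝ) ≠ 0 := Nat.cast_ne_zero.mpr hm.ne'
  set A : Matrix V V ℝ := G.adjMatrix ℝ with hAdef
  have hAapp : ∀ u v, A u v = if G.Adj u v then (1:ℝ) else 0 := by
    intro u v; rw [hAdef]; simp [SimpleGraph.adjMatrix_apply]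
  have hArow : ∀ x w, A w x = if G.Adj x w then (1:ℝ) else 0 := by
    intro x w; rw [hAapp w x]
    by_cases h : G.Adj x w
    · simp [h, h.symm]
    · have h' : ¬ G.Adj w x := fun hh => h hh.symm
      simp [h, h']
  set χ : V → ℝ := fun v => if v ∈ V1 then 1 else if v ∈ V2 then -1 else 0 with hχdef
  set Q : Matrix V V ℝ :=
    Matrix.of (fun u v => (if u = v then (1:ℝ) else 0) - χ u * χ v / m) with hQdef
  have hn12 : ∀ v, v ∈ V1 → v ∉ V2 := fun v hv => Finset.disjoint_left.mp h12 hv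
  have hnW1 : ∀ v, v ∈ W → v ∉ V1 := fun v hv h => Finset.disjoint_left.mp h1W h hv
  have hnW2 : ∀ v, v ∈ W → v ∉ V2 := fun v hv h => Finset.disjoint_left.mp h2W h hv
  have hχ1 : ∀ v ∈ V1, χ v = 1 := by intro v hv; simp [hχdef, hv]
  have hχ2 : ∀ v ∈ V2, χ v = -1 := by
    intro v hv
    have h1 : v ∉ V1 := fun h => hn12 v h hv
    simp [hχdef, hv, h1]
  have hχW : ∀ v ∈ W, χ v = 0 := by
    intro v hv; simp [hχdef, hnW1 v hv, hnW2 v hv]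
  have xor_flip : ∀ (p q : Prop), p → (Xor' p q ↔ ¬ q) := by
    intro p q hp; unfold Xor'; unfold Xor; tauto
  have xor_same : ∀ (p q : Prop), ¬ p → (Xor' p q ↔ q) := by
    intro p q hp; unfold Xor'; unfold Xor; tauto
  -- the vector y = A χ
  set y : V → ℝ := fun x => ∑ w, χ w * A w x with hydef
  have hsum1 : ∀ (S : Finset V) (x : V),
      ∑ w ∈ S, A w x = ((S.filter (fun w => G.Adj x w)).card : ℝ) := by
    intro S x
    rw [Finset.sum_congr rfl (fun w _ => hArow x w)]
    simp [Finset.sum_boole]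
  have hy_card : ∀ x, y x = ((V1.filter (fun w => G.Adj x w)).card : ℝ)
      - ((V2.filter (fun w => G.Adj x w)).card : ℝ) := by
    intro x
    have hterm : ∀ w, χ w * A w x =
        (if w ∈ V1 then A w x else 0) - (if w ∈ V2 then A w x else 0) := by
      intro w
      by_cases h1 : w ∈ V1
      · simp [hχ1 w h1, h1, hn12 w h1]
      · by_cases h2 : w ∈ V2
        · simp [hχ2 w h2, h1, h2]
        · simp [hχdef, h1, h2]
    have : y x = ∑ w, ((if w ∈ V1 then A w x else 0) - (if w ∈ V2 then A w x else 0)) := by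
      rw [hydef]; exact Finset.sum_congr rfl (fun w _ => hterm w)
    rw [this, Finset.sum_sub_distrib, Finset.sum_ite_mem, Finset.sum_ite_mem,
      Finset.univ_inter, Finset.univ_inter, hsum1, hsum1]
  have hy1 : ∀ v ∈ V1, y v = (ℓ : ℝ) := by
    intro v hv
    rw [hy_card]
    exact_mod_cast hV1 v hv
  have hy2 : ∀ v ∈ V2, y v = -(ℓ : ℝ) := by
    intro v hv
    rw [hy_card]
    have h := hV2 v hv
    have h' : ((V1.filter (fun w => G.Adj v w)).card : ℤ)
        - (V2.filter (fun w => G.Adj v w)).card = -ℓ := by omega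
    exact_mod_cast h'
  have hyχS : ∀ u, u ∈ V1 ∨ u ∈ V2 → y u = (ℓ : ℝ) * χ u := by
    rintro u (h | h)
    · rw [hy1 u h, hχ1 u h]; ring
    · rw [hy2 u h, hχ2 u h]; ring
  have hχsq : ∑ w, χ w * χ w = 2 * (m : ℝ) := by
    have hterm : ∀ w, χ w * χ w =
        (if w ∈ V1 then (1:ℝ) else 0) + (if w ∈ V2 then (1:ℝ) else 0) := by
      intro w
      by_cases h1 : w ∈ V1
      · simp [hχ1 w h1, h1, hn12 w h1]
      · by_cases h2 : w ∈ V2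
        · simp [hχ2 w h2, h1, h2]
        · simp [hχdef, h1, h2]
    rw [Finset.sum_congr rfl (fun w _ => hterm w), Finset.sum_add_distrib,
      Finset.sum_ite_mem, Finset.sum_ite_mem, Finset.univ_inter, Finset.univ_inter,
      Finset.sum_const, Finset.sum_const, hcard1, hcard2]
    simp; ring
  -- values of y on W
  have hyW1 : ∀ v, (∀ w ∈ V1, G.Adj v w) → (∀ w ∈ V2, ¬ G.Adj v w) → y v = (m : ℝ) := by
    intro v ha hb
    rw [hy_card, Finset.filter_true_of_mem ha, Finset.filter_false_of_mem hb, hcard1]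
    simp
  have hyW2 : ∀ v, (∀ w ∈ V2, G.Adj v w) → (∀ w ∈ V1, ¬ G.Adj v w) → y v = -(m : ℝ) := by
    intro v ha hb
    rw [hy_card, Finset.filter_true_of_mem ha, Finset.filter_false_of_mem hb, hcard2]
    simp
  -- ∑ x, y x * χ x = 2 m ℓ
  have hyχsum : ∑ x, y x * χ x = 2 * (m : ℝ) * ℓ := by
    have hterm : ∀ x, y x * χ x = (ℓ : ℝ) * (χ x * χ x) := by
      intro x
      rcases hcover x with h | h | h
      · rw [hyχS x (Or.inl h)]; ring
      · rw [hyχS x (Or.inr h)]; ring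
      · rw [hχW x h]; ring
    rw [Finset.sum_congr rfl (fun x _ => hterm x), ← Finset.mul_sum, hχsq]; ring
  have hAχ : ∀ u, ∑ x, A u x * χ x = y u := by
    intro u
    rw [hydef]
    refine Finset.sum_congr rfl (fun x _ => ?_)
    rw [hAapp u x, hArow u x, mul_comm]
  -- Q * Q = 1
  have hQQ : Q * Q = 1 := by
    ext u v
    rw [Matrix.mul_apply]
    have hterm : ∀ w, Q u w * Q w v =
        ((if u = w then (if w = v then (1:ℝ) else 0) else 0)
          - (if u = w then χ w * χ v / m else 0))
          - (if w = v then χ u * χ w / m else 0)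
          + (χ u * χ v / (m * m)) * (χ w * χ w) := by
      intro w
      simp only [hQdef, Matrix.of_apply]
      split_ifs with h1 h2 h3 h4 <;> ring
    rw [Finset.sum_congr rfl (fun w _ => hterm w)]
    rw [Finset.sum_add_distrib, Finset.sum_sub_distrib, Finset.sum_sub_distrib,
      ← Finset.mul_sum, hχsq]
    simp only [Finset.sum_ite_eq, Finset.mem_univ, if_true]
    have hv : ∑ w, (if w = v then χ u * χ w / m else 0) = χ u * χ v / m := by
      rw [Finset.sum_ite_eq']; simp
    rw [hv, Matrix.one_apply]
    by_cases h : u = v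
    · subst h; simp; field_simp; ring
    · simp [h]; field_simp; ring
  -- (Q * A) entries
  have hQA : ∀ u x, (Q * A) u x = A u x - χ u * y x / m := by
    intro u x
    rw [Matrix.mul_apply]
    have hterm : ∀ w, Q u w * A w x =
        (if u = w then A w x else 0) - (χ u / m) * (χ w * A w x) := by
      intro w
      simp only [hQdef, Matrix.of_apply]
      split_ifs with h <;> ring
    rw [Finset.sum_congr rfl (fun w _ => hterm w), Finset.sum_sub_distrib,
      ← Finset.mul_sum]
    have h1 : ∑ w, (if u = w then A w x else 0) = A u x := by
      rw [Finset.sum_ite_eq]; simp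
    have h2 : ∑ w, χ w * A w x = y x := by rw [hydef]
    rw [h1, h2]; ring
  -- (Q * A * Q) entries
  have hQAQ : ∀ u v, (Q * A * Q) u v =
      A u v - χ u * y v / m - y u * χ v / m + 2 * (ℓ : ℝ) * (χ u * χ v) / m := by
    intro u v
    rw [Matrix.mul_apply]
    have hterm : ∀ x, (Q * A) u x * Q x v =
        ((if x = v then A u x else 0)
          - (χ v / m) * (A u x * χ x))
          - (if x = v then χ u * y x / m else 0)
          + (χ u * χ v / (m * m)) * (y x * χ x) := by
      intro x
      rw [hQA u x]
      simp only [hQdef, Matrix.of_apply]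
      split_ifs with h <;> ring
    rw [Finset.sum_congr rfl (fun x _ => hterm x)]
    rw [Finset.sum_add_distrib, Finset.sum_sub_distrib, Finset.sum_sub_distrib,
      ← Finset.mul_sum, ← Finset.mul_sum, hyχsum, hAχ]
    have h1 : ∑ x, (if x = v then A u x else 0) = A u v := by
      rw [Finset.sum_ite_eq']; simp
    have h2 : ∑ x, (if x = v then χ u * y x / m else 0) = χ u * y v / m := by
      rw [Finset.sum_ite_eq']; simp
    rw [h1, h2]
    field_simp
    ring
  -- G'.adjMatrix = Q * A * Q
  have hA'app : ∀ u v, (G'.adjMatrix ℝ) u v = if G'.Adj u v then (1:ℝ) else 0 := by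
    intro u v; simp [SimpleGraph.adjMatrix_apply]
  have hmain : G'.adjMatrix ℝ = Q * A * Q := by
    ext u v
    rw [hQAQ u v, hA'app]
    -- abbreviation for the flip condition
    rcases hcover u with hu | hu | hu
    · -- u ∈ V1
      rcases hcover v with hv | hv | hv
      · -- both in V1 ∪ V2 (case V1,V1)
        have hiff : G'.Adj u v ↔ G.Adj u v := by
          rw [hG' u v]
          refine xor_same _ _ ?_
          rintro (⟨hw, -, -⟩ | ⟨hw, -, -⟩)
          · exact hnW1 u hw hu
          · exact hnW1 v hw hv
        rw [hyχS u (Or.inl hu), hyχS v (Or.inl hv)]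
        by_cases h : G.Adj u v <;> simp [hiff, h, hAapp u v] <;> ring
      · have hiff : G'.Adj u v ↔ G.Adj u v := by
          rw [hG' u v]
          refine xor_same _ _ ?_
          rintro (⟨hw, -, -⟩ | ⟨hw, -, -⟩)
          · exact hnW1 u hw hu
          · exact hnW2 v hw hv
        rw [hyχS u (Or.inl hu), hyχS v (Or.inr hv)]
        by_cases h : G.Adj u v <;> simp [hiff, h, hAapp u v] <;> ring
      · -- u ∈ V1, v ∈ W
        rw [hχW v hv]
        rcases hW v hv with ⟨ha, hb⟩ | ⟨ha, hb⟩ | h3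
        · -- type (i)
          have hyv : y v = (m : ℝ) := hyW1 v ha hb
          have hiff : G'.Adj u v ↔ ¬ G.Adj u v := by
            rw [hG' u v]
            have hL : v ∈ W ∧ (u ∈ V1 ∨ u ∈ V2) ∧
                (((∀ w ∈ V1, G.Adj v w) ∧ (∀ w ∈ V2, ¬ G.Adj v w)) ∨
                 ((∀ w ∈ V2, G.Adj v w) ∧ (∀ w ∈ V1, ¬ G.Adj v w))) :=
              ⟨hv, Or.inl hu, Or.inl ⟨ha, hb⟩⟩
            exact xor_flip _ _ (Or.inr hL)
          have hadj : G.Adj u v := (ha u hu).symm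
          rw [hyv, hχ1 u hu]
          simp [hiff, hadj, hAapp u v]
          field_simp
          norm_num
        · -- type (ii)
          have hyv : y v = -(m : ℝ) := hyW2 v ha hb
          have hiff : G'.Adj u v ↔ ¬ G.Adj u v := by
            rw [hG' u v]
            have hL : v ∈ W ∧ (u ∈ V1 ∨ u ∈ V2) ∧
                (((∀ w ∈ V1, G.Adj v w) ∧ (∀ w ∈ V2, ¬ G.Adj v w)) ∨
                 ((∀ w ∈ V2, G.Adj v w) ∧ (∀ w ∈ V1, ¬ G.Adj v w))) :=
              ⟨hv, Or.inl hu, Or.inr ⟨ha, hb⟩⟩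
            exact xor_flip _ _ (Or.inr hL)
          have hadj : ¬ G.Adj u v := fun h => hb u hu h.symm
          rw [hyv, hχ1 u hu]
          simp [hiff, hadj, hAapp u v]
          field_simp
        · -- type (iii)
          have hyv : y v = 0 := by rw [hy_card, h3]; ring
          have hP : ¬ (((∀ w ∈ V1, G.Adj v w) ∧ (∀ w ∈ V2, ¬ G.Adj v w)) ∨
              ((∀ w ∈ V2, G.Adj v w) ∧ (∀ w ∈ V1, ¬ G.Adj v w))) := by
            rintro (⟨ha, hb⟩ | ⟨ha, hb⟩)
            · have e1 : (V1.filter (fun w => G.Adj v w)).card = m := by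
                rw [Finset.filter_true_of_mem ha, hcard1]
              have e2 : (V2.filter (fun w => G.Adj v w)).card = 0 := by
                rw [Finset.filter_false_of_mem hb, Finset.card_empty]
              omega
            · have e1 : (V2.filter (fun w => G.Adj v w)).card = m := by
                rw [Finset.filter_true_of_mem ha, hcard2]
              have e2 : (V1.filter (fun w => G.Adj v w)).card = 0 := by
                rw [Finset.filter_false_of_mem hb, Finset.card_empty]
              omega
          have hiff : G'.Adj u v ↔ G.Adj u v := by
            rw [hG' u v]
            refine xor_same _ _ ?_
            rintro (⟨hw, -, -⟩ | ⟨-, -, hp⟩)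
            · exact hnW1 u hw hu
            · exact hP hp
          rw [hyv]
          by_cases h : G.Adj u v <;> simp [hiff, h, hAapp u v] <;> ring
    · -- u ∈ V2 : symmetric to u ∈ V1
      rcases hcover v with hv | hv | hv
      · have hiff : G'.Adj u v ↔ G.Adj u v := by
          rw [hG' u v]
          refine xor_same _ _ ?_
          rintro (⟨hw, -, -⟩ | ⟨hw, -, -⟩)
          · exact hnW2 u hw hu
          · exact hnW1 v hw hv
        rw [hyχS u (Or.inr hu), hyχS v (Or.inl hv)]
        by_cases h : G.Adj u v <;> simp [hiff, h, hAapp u v] <;> ring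
      · have hiff : G'.Adj u v ↔ G.Adj u v := by
          rw [hG' u v]
          refine xor_same _ _ ?_
          rintro (⟨hw, -, -⟩ | ⟨hw, -, -⟩)
          · exact hnW2 u hw hu
          · exact hnW2 v hw hv
        rw [hyχS u (Or.inr hu), hyχS v (Or.inr hv)]
        by_cases h : G.Adj u v <;> simp [hiff, h, hAapp u v] <;> ring
      · rw [hχW v hv]
        rcases hW v hv with ⟨ha, hb⟩ | ⟨ha, hb⟩ | h3
        · have hyv : y v = (m : ℝ) := hyW1 v ha hb
          have hiff : G'.Adj u v ↔ ¬ G.Adj u v := by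
            rw [hG' u v]
            have hL : v ∈ W ∧ (u ∈ V1 ∨ u ∈ V2) ∧
                (((∀ w ∈ V1, G.Adj v w) ∧ (∀ w ∈ V2, ¬ G.Adj v w)) ∨
                 ((∀ w ∈ V2, G.Adj v w) ∧ (∀ w ∈ V1, ¬ G.Adj v w))) :=
              ⟨hv, Or.inr hu, Or.inl ⟨ha, hb⟩⟩
            exact xor_flip _ _ (Or.inr hL)
          have hadj : ¬ G.Adj u v := fun h => hb u hu h.symm
          rw [hyv, hχ2 u hu]
          simp [hiff, hadj, hAapp u v]
          field_simp
        · have hyv : y v = -(m : ℝ) := hyW2 v ha hb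
          have hiff : G'.Adj u v ↔ ¬ G.Adj u v := by
            rw [hG' u v]
            have hL : v ∈ W ∧ (u ∈ V1 ∨ u ∈ V2) ∧
                (((∀ w ∈ V1, G.Adj v w) ∧ (∀ w ∈ V2, ¬ G.Adj v w)) ∨
                 ((∀ w ∈ V2, G.Adj v w) ∧ (∀ w ∈ V1, ¬ G.Adj v w))) :=
              ⟨hv, Or.inr hu, Or.inr ⟨ha, hb⟩⟩
            exact xor_flip _ _ (Or.inr hL)
          have hadj : G.Adj u v := (ha u hu).symm
          rw [hyv, hχ2 u hu]
          simp [hiff, hadj, hAapp u v]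
          field_simp
          norm_num
        · have hyv : y v = 0 := by rw [hy_card, h3]; ring
          have hP : ¬ (((∀ w ∈ V1, G.Adj v w) ∧ (∀ w ∈ V2, ¬ G.Adj v w)) ∨
              ((∀ w ∈ V2, G.Adj v w) ∧ (∀ w ∈ V1, ¬ G.Adj v w))) := by
            rintro (⟨ha, hb⟩ | ⟨ha, hb⟩)
            · have e1 : (V1.filter (fun w => G.Adj v w)).card = m := by
                rw [Finset.filter_true_of_mem ha, hcard1]
              have e2 : (V2.filter (fun w => G.Adj v w)).card = 0 := by
                rw [Finset.filter_false_of_mem hb, Finset.card_empty]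
              omega
            · have e1 : (V2.filter (fun w => G.Adj v w)).card = m := by
                rw [Finset.filter_true_of_mem ha, hcard2]
              have e2 : (V1.filter (fun w => G.Adj v w)).card = 0 := by
                rw [Finset.filter_false_of_mem hb, Finset.card_empty]
              omega
          have hiff : G'.Adj u v ↔ G.Adj u v := by
            rw [hG' u v]
            refine xor_same _ _ ?_
            rintro (⟨hw, -, -⟩ | ⟨-, -, hp⟩)
            · exact hnW2 u hw hu
            · exact hP hp
          rw [hyv]
          by_cases h : G.Adj u v <;> simp [hiff, h, hAapp u v] <;> ring
    · -- u ∈ W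
      rw [hχW u hu]
      rcases hcover v with hv | hv | hv
      · -- v ∈ V1
        rcases hW u hu with ⟨ha, hb⟩ | ⟨ha, hb⟩ | h3
        · have hyu : y u = (m : ℝ) := hyW1 u ha hb
          have hiff : G'.Adj u v ↔ ¬ G.Adj u v := by
            rw [hG' u v]
            have hL : u ∈ W ∧ (v ∈ V1 ∨ v ∈ V2) ∧
                (((∀ w ∈ V1, G.Adj u w) ∧ (∀ w ∈ V2, ¬ G.Adj u w)) ∨
                 ((∀ w ∈ V2, G.Adj u w) ∧ (∀ w ∈ V1, ¬ G.Adj u w))) :=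
              ⟨hu, Or.inl hv, Or.inl ⟨ha, hb⟩⟩
            exact xor_flip _ _ (Or.inl hL)
          have hadj : G.Adj u v := ha v hv
          rw [hyu, hχ1 v hv]
          simp [hiff, hadj, hAapp u v]
          field_simp
          norm_num
        · have hyu : y u = -(m : ℝ) := hyW2 u ha hb
          have hiff : G'.Adj u v ↔ ¬ G.Adj u v := by
            rw [hG' u v]
            have hL : u ∈ W ∧ (v ∈ V1 ∨ v ∈ V2) ∧
                (((∀ w ∈ V1, G.Adj u w) ∧ (∀ w ∈ V2, ¬ G.Adj u w)) ∨
                 ((∀ w ∈ V2, G.Adj u w) ∧ (∀ w ∈ V1, ¬ G.Adj u w))) :=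
              ⟨hu, Or.inl hv, Or.inr ⟨ha, hb⟩⟩
            exact xor_flip _ _ (Or.inl hL)
          have hadj : ¬ G.Adj u v := hb v hv
          rw [hyu, hχ1 v hv]
          simp [hiff, hadj, hAapp u v]
          field_simp
        · have hyu : y u = 0 := by rw [hy_card, h3]; ring
          have hP : ¬ (((∀ w ∈ V1, G.Adj u w) ∧ (∀ w ∈ V2, ¬ G.Adj u w)) ∨
              ((∀ w ∈ V2, G.Adj u w) ∧ (∀ w ∈ V1, ¬ G.Adj u w))) := by
            rintro (⟨ha, hb⟩ | ⟨ha, hb⟩)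
            · have e1 : (V1.filter (fun w => G.Adj u w)).card = m := by
                rw [Finset.filter_true_of_mem ha, hcard1]
              have e2 : (V2.filter (fun w => G.Adj u w)).card = 0 := by
                rw [Finset.filter_false_of_mem hb, Finset.card_empty]
              omega
            · have e1 : (V2.filter (fun w => G.Adj u w)).card = m := by
                rw [Finset.filter_true_of_mem ha, hcard2]
              have e2 : (V1.filter (fun w => G.Adj u w)).card = 0 := by
                rw [Finset.filter_false_of_mem hb, Finset.card_empty]
              omega
          have hiff : G'.Adj u v ↔ G.Adj u v := by
            rw [hG' u v]
            refine xor_same _ _ ?_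
            rintro (⟨-, -, hp⟩ | ⟨hw, -, -⟩)
            · exact hP hp
            · exact hnW1 v hw hv
          rw [hyu]
          by_cases h : G.Adj u v <;> simp [hiff, h, hAapp u v] <;> ring
      · -- v ∈ V2
        rcases hW u hu with ⟨ha, hb⟩ | ⟨ha, hb⟩ | h3
        · have hyu : y u = (m : ℝ) := hyW1 u ha hb
          have hiff : G'.Adj u v ↔ ¬ G.Adj u v := by
            rw [hG' u v]
            have hL : u ∈ W ∧ (v ∈ V1 ∨ v ∈ V2) ∧
                (((∀ w ∈ V1, G.Adj u w) ∧ (∀ w ∈ V2, ¬ G.Adj u w)) ∨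
                 ((∀ w ∈ V2, G.Adj u w) ∧ (∀ w ∈ V1, ¬ G.Adj u w))) :=
              ⟨hu, Or.inr hv, Or.inl ⟨ha, hb⟩⟩
            exact xor_flip _ _ (Or.inl hL)
          have hadj : ¬ G.Adj u v := hb v hv
          rw [hyu, hχ2 v hv]
          simp [hiff, hadj, hAapp u v]
          field_simp
        · have hyu : y u = -(m : ℝ) := hyW2 u ha hb
          have hiff : G'.Adj u v ↔ ¬ G.Adj u v := by
            rw [hG' u v]
            have hL : u ∈ W ∧ (v ∈ V1 ∨ v ∈ V2) ∧
                (((∀ w ∈ V1, G.Adj u w) ∧ (∀ w ∈ V2, ¬ G.Adj u w)) ∨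
                 ((∀ w ∈ V2, G.Adj u w) ∧ (∀ w ∈ V1, ¬ G.Adj u w))) :=
              ⟨hu, Or.inr hv, Or.inr ⟨ha, hb⟩⟩
            exact xor_flip _ _ (Or.inl hL)
          have hadj : G.Adj u v := ha v hv
          rw [hyu, hχ2 v hv]
          simp [hiff, hadj, hAapp u v]
          field_simp
          norm_num
        · have hyu : y u = 0 := by rw [hy_card, h3]; ring
          have hP : ¬ (((∀ w ∈ V1, G.Adj u w) ∧ (∀ w ∈ V2, ¬ G.Adj u w)) ∨
              ((∀ w ∈ V2, G.Adj u w) ∧ (∀ w ∈ V1, ¬ G.Adj u w))) := by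
            rintro (⟨ha, hb⟩ | ⟨ha, hb⟩)
            · have e1 : (V1.filter (fun w => G.Adj u w)).card = m := by
                rw [Finset.filter_true_of_mem ha, hcard1]
              have e2 : (V2.filter (fun w => G.Adj u w)).card = 0 := by
                rw [Finset.filter_false_of_mem hb, Finset.card_empty]
              omega
            · have e1 : (V2.filter (fun w => G.Adj u w)).card = m := by
                rw [Finset.filter_true_of_mem ha, hcard2]
              have e2 : (V1.filter (fun w => G.Adj u w)).card = 0 := by
                rw [Finset.filter_false_of_mem hb, Finset.card_empty]
              omega
          have hiff : G'.Adj u v ↔ G.Adj u v := by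
            rw [hG' u v]
            refine xor_same _ _ ?_
            rintro (⟨-, -, hp⟩ | ⟨hw, -, -⟩)
            · exact hP hp
            · exact hnW2 v hw hv
          rw [hyu]
          by_cases h : G.Adj u v <;> simp [hiff, h, hAapp u v] <;> ring
      · -- both in W
        rw [hχW v hv]
        have hiff : G'.Adj u v ↔ G.Adj u v := by
          rw [hG' u v]
          refine xor_same _ _ ?_
          rintro (⟨-, hvv, -⟩ | ⟨-, huu, -⟩)
          · rcases hvv with h | h
            · exact hnW1 v hv h
            · exact hnW2 v hv h
          · rcases huu with h | h
            · exact hnW1 u hu h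
            · exact hnW2 u hu h
        by_cases h : G.Adj u v <;> simp [hiff, h, hAapp u v] <;> ring
  rw [hmain, charpoly_conj_involution' Q A hQQ]
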